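/- Let K be an infinite field, let n ≥ 1, d ≥ 1, and fix a d^{n}-cage over K. If P ∈ K[x_0,…,x_n] is homogeneous of degree e with 0 ≤ e < d, and P(p_I) = 0 for every I ∈ {1,…,d}^n with ∑_{j=1}^n (I_j − 1) ≤ d − 1 (the simplicial set of nodes), then P is the zero polynomial. Consequently, any nonzero homogeneous polynomial of degree at most d that vanishes on a supra-simplicial set of nodes of a d^{n}-cage has degree exactly d. -/

import Mathlib

open MvPolynomial Finset





private lemma cage_eval_aeval {R σ τ : Type*} [CommSemiring R] (x : τ → R)
    (ψ : σ → MvPolynomial τ R) (P : MvPolynomial σ R) :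
    eval x (aeval ψ P) = eval (fun k => eval x (ψ k)) P := by
  rw [aeval_def, eval_eval₂]
  have h : (eval x).comp (algebraMap R (MvPolynomial τ R)) = RingHom.id R :=
    RingHom.ext fun r => by simp
  rw [h, eval₂_id]

private lemma cage_degree_one_classify {σ : Type*} {m : σ →₀ ℕ} (hm : m.degree = 1) :
    ∃ k, m = Finsupp.single k 1 := by
  classical
  have hne : m.support.Nonempty := by
    rw [Finsupp.support_nonempty_iff]
    rintro rfl
    simp [map_zero] at hm
  obtain ⟨k, hk⟩ := hne
  have hk1 : 1 ≤ m k := Nat.one_le_iff_ne_zero.mpr (Finsupp.mem_support_iff.mp hk)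
  refine ⟨k, Finsupp.ext fun j => ?_⟩
  rcases eq_or_ne j k with rfl | hj
  · have : m j ≤ m.degree := Finset.single_le_sum (fun _ _ => Nat.zero_le _) hk
    simp only [Finsupp.single_eq_same]
    omega
  · rw [Finsupp.single_eq_of_ne' (Ne.symm hj)]
    by_contra h0
    have hjs : j ∈ m.support := Finsupp.mem_support_iff.mpr h0
    have : m j + m k ≤ m.degree := by
      have := Finset.sum_le_sum_of_subset (f := m)
        (Finset.insert_subset hjs (Finset.singleton_subset_iff.mpr hk))
      simpa [Finset.sum_insert, Finset.mem_singleton, hj, Finsupp.degree_apply] using this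
    omega

private lemma cage_homog_one_expand {K σ : Type*} [CommSemiring K] [Fintype σ] [DecidableEq σ]
    {L : MvPolynomial σ K} (h : L.IsHomogeneous 1) :
    L = ∑ k, C (coeff (Finsupp.single k 1) L) * X k := by
  ext m
  rw [coeff_sum]
  simp_rw [coeff_C_mul, coeff_X']
  rcases eq_or_ne m.degree 1 with hm | hm
  · obtain ⟨k₀, rfl⟩ := cage_degree_one_classify hm
    rw [Finset.sum_eq_single k₀]
    · simp
    · intro b _ hb
      rw [if_neg, mul_zero]
      exact fun hc => hb (by
        have := (Finsupp.single_left_inj (one_ne_zero (α := ℕ))).mp hc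
        exact this)
    · simp
  · rw [h.coeff_eq_zero hm]
    refine (Finset.sum_eq_zero fun k _ => ?_).symm
    rw [if_neg, mul_zero]
    rintro rfl
    exact hm (Finsupp.degree_single k 1)


private lemma cage_eval_smul_homog {K σ : Type*} [CommSemiring K] {P : MvPolynomial σ K} {e : ℕ}
    (h : P.IsHomogeneous e) (c : K) (v : σ → K) :
    eval (c • v) P = c ^ e * eval v P := by
  conv_lhs => rw [P.as_sum]
  conv_rhs => rw [P.as_sum]
  rw [map_sum, map_sum, Finset.mul_sum]
  refine Finset.sum_congr rfl fun m hm => ?_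
  have hdeg : m.degree = e := by
    by_contra hd
    exact Finsupp.mem_support_iff.mp hm (h.coeff_eq_zero hd)
  rw [eval_monomial, eval_monomial]
  unfold Finsupp.prod
  have : ∀ i ∈ m.support, (c • v) i ^ m i = c ^ m i * v i ^ m i := by
    intro i _
    rw [Pi.smul_apply, smul_eq_mul, mul_pow]
  rw [Finset.prod_congr rfl this, Finset.prod_mul_distrib, Finset.prod_pow_eq_pow_sum]
  rw [show ∑ i ∈ m.support, m i = e from hdeg]
  ring



private lemma cage_X_dvd_sub_aeval_update {K σ : Type*} [CommRing K] [DecidableEq σ]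
    (k₀ : σ) (P : MvPolynomial σ K) :
    X k₀ ∣ P - aeval (Function.update X k₀ 0) P := by
  induction P using MvPolynomial.induction_on with
  | C a => simp
  | add p q hp hq =>
      have h : p + q - aeval (Function.update X k₀ 0) (p + q)
          = (p - aeval (Function.update X k₀ 0) p) + (q - aeval (Function.update X k₀ 0) q) := by
        rw [map_add]; ring
      rw [h]
      exact dvd_add hp hq
  | mul_X p i hp =>
      rw [map_mul, aeval_X]
      rcases eq_or_ne i k₀ with rfl | hne
      · rw [Function.update_self, mul_zero, sub_zero]
        exact Dvd.intro_left _ rfl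
      · rw [Function.update_of_ne hne]
        have h : p * X i - aeval (Function.update X k₀ 0) p * X i
            = (p - aeval (Function.update X k₀ 0) p) * X i := by ring
        rw [h]
        exact Dvd.dvd.mul_right hp _

private lemma cage_X_dvd_of_vanish {K σ : Type*} [Field K] [Infinite K] [DecidableEq σ]
    (k₀ : σ) (P : MvPolynomial σ K) (h : ∀ v : σ → K, v k₀ = 0 → eval v P = 0) :
    X k₀ ∣ P := by
  have hr : aeval (Function.update X k₀ (0 : MvPolynomial σ K)) P = 0 := by
    apply MvPolynomial.funext (q := 0)
    intro v
    rw [cage_eval_aeval, map_zero]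
    have hv : (fun k => eval v (Function.update X k₀ 0 k)) = Function.update v k₀ 0 := by
      funext k
      rcases eq_or_ne k k₀ with rfl | hk
      · simp
      · simp [Function.update_of_ne hk]
    rw [hv]
    exact h _ (Function.update_self _ _ _)
  have hd := cage_X_dvd_sub_aeval_update k₀ P
  rwa [hr, sub_zero] at hd



private lemma cage_aeval_aeval {K σ τ υ : Type*} [CommSemiring K]
    (f : τ → MvPolynomial υ K) (g : σ → MvPolynomial τ K) (P : MvPolynomial σ K) :
    aeval f (aeval g P) = aeval (fun i => aeval f (g i)) P := by
  rw [aeval_eq_bind₁ g, aeval_bind₁]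

private lemma cage_hyperplane_dvd {K σ : Type*} [Field K] [Infinite K] [Fintype σ]
    [DecidableEq σ] {L₀ : MvPolynomial σ K} (hL : L₀.IsHomogeneous 1) (hL0 : L₀ ≠ 0)
    (P : MvPolynomial σ K) (h : ∀ v, eval v L₀ = 0 → eval v P = 0) :
    ∃ Q, P = L₀ * Q := by
  set cc : σ → K := fun k => coeff (Finsupp.single k 1) L₀ with hcc
  have hexp : L₀ = ∑ k, C (cc k) * X k := cage_homog_one_expand hL
  have hex : ∃ k₀, cc k₀ ≠ 0 := by
    by_contra hall
    push_neg at hall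
    apply hL0
    rw [hexp]
    exact Finset.sum_eq_zero fun k _ => by rw [hall k, map_zero, zero_mul]
  obtain ⟨k₀, hc⟩ := hex
  set c : K := cc k₀ with hcdef
  set S : MvPolynomial σ K := ∑ k ∈ Finset.univ.erase k₀, C (cc k) * X k with hS
  have hLS : L₀ = C c * X k₀ + S := by
    rw [hexp, hS, ← Finset.add_sum_erase _ _ (Finset.mem_univ k₀)]
  set τf : σ → MvPolynomial σ K :=
    Function.update X k₀ (C c⁻¹ * (X k₀ - S)) with hτf
  have hevS : ∀ v : σ → K, eval v S = ∑ k ∈ Finset.univ.erase k₀, cc k * v k := by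
    intro v
    rw [hS, map_sum]
    exact Finset.sum_congr rfl fun k _ => by rw [map_mul, eval_C, eval_X]
  set P₁ : MvPolynomial σ K := aeval τf P with hP₁
  have hvan1 : ∀ v : σ → K, v k₀ = 0 → eval v P₁ = 0 := by
    intro v hv
    rw [hP₁, cage_eval_aeval]
    apply h
    have hvS : eval (fun k => eval v (τf k)) S = eval v S := by
      rw [hevS, hevS]
      refine Finset.sum_congr rfl fun k hk => ?_
      rw [hτf, Function.update_of_ne (Finset.ne_of_mem_erase hk), eval_X]
    rw [hLS, map_add, map_mul, eval_C, eval_X, hvS]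
    rw [hτf, Function.update_self]
    rw [map_mul, eval_C, map_sub, eval_X, hv]
    field_simp
    ring
  obtain ⟨Q₁, hQ₁⟩ := cage_X_dvd_of_vanish k₀ P₁ hvan1
  set σf : σ → MvPolynomial σ K := Function.update X k₀ L₀ with hσf
  have hσS : aeval σf S = S := by
    rw [hS, map_sum]
    refine Finset.sum_congr rfl fun k hk => ?_
    rw [map_mul, aeval_C, aeval_X, hσf, Function.update_of_ne (Finset.ne_of_mem_erase hk)]
    rfl
  have hinv : ∀ k, aeval σf (τf k) = X k := by
    intro k
    rcases eq_or_ne k k₀ with heq | hk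
    · subst heq
      rw [hτf, Function.update_self, map_mul, map_sub, aeval_C, aeval_X, hσS,
        hσf, Function.update_self]
      have : L₀ - S = C c * X k := by rw [hLS]; ring
      rw [this]
      have : algebraMap K (MvPolynomial σ K) c⁻¹ = C c⁻¹ := rfl
      rw [this, ← mul_assoc, ← map_mul, inv_mul_cancel₀ hc, map_one, one_mul]
    · rw [hτf, Function.update_of_ne hk, aeval_X, hσf, Function.update_of_ne hk]
  have hPrec : aeval σf P₁ = P := by
    rw [hP₁, cage_aeval_aeval]
    have : (fun i => aeval σf (τf i)) = X := funext hinv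
    rw [this]
    exact aeval_X_left_apply P
  refine ⟨aeval σf Q₁, ?_⟩
  rw [← hPrec, hQ₁, map_mul, aeval_X, hσf, Function.update_self]


private lemma cage_homog_factor {K σ : Type*} [CommSemiring K]
    {L₀ P Q : MvPolynomial σ K} {e' : ℕ}
    (hP : P.IsHomogeneous (e' + 1)) (hL : L₀.IsHomogeneous 1) (hPQ : P = L₀ * Q) :
    P = 0 ∨ ∃ Qc : MvPolynomial σ K, Qc.IsHomogeneous e' ∧ P = L₀ * Qc := by
  have h2 : homogeneousComponent (e' + 1) P = P := by
    rw [homogeneousComponent_of_mem ((mem_homogeneousSubmodule _ _).mpr hP), if_pos rfl]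
  have h3 : P = ∑ i ∈ Finset.range (Q.totalDegree + 1),
      if i = e' then L₀ * homogeneousComponent i Q else 0 := by
    calc P = homogeneousComponent (e' + 1) P := h2.symm
      _ = homogeneousComponent (e' + 1)
            (∑ i ∈ Finset.range (Q.totalDegree + 1), L₀ * homogeneousComponent i Q) := by
          rw [← Finset.mul_sum, Q.sum_homogeneousComponent, ← hPQ]
      _ = ∑ i ∈ Finset.range (Q.totalDegree + 1),
            homogeneousComponent (e' + 1) (L₀ * homogeneousComponent i Q) := map_sum _ _ _
      _ = ∑ i ∈ Finset.range (Q.totalDegree + 1),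
            if i = e' then L₀ * homogeneousComponent i Q else 0 := by
          refine Finset.sum_congr rfl fun i _ => ?_
          rw [homogeneousComponent_of_mem ((mem_homogeneousSubmodule _ _).mpr
            (hL.mul (homogeneousComponent_isHomogeneous i Q)))]
          rcases eq_or_ne i e' with rfl | hi
          · rw [if_pos (by omega : i + 1 = 1 + i), if_pos rfl]
          · rw [if_neg (fun hc => hi (by omega)), if_neg hi]
  rw [Finset.sum_ite_eq' (Finset.range (Q.totalDegree + 1)) e'
    (fun i => L₀ * homogeneousComponent i Q)] at h3
  by_cases he : e' ∈ Finset.range (Q.totalDegree + 1)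
  · rw [if_pos he] at h3
    exact Or.inr ⟨homogeneousComponent e' Q, homogeneousComponent_isHomogeneous e' Q, h3⟩
  · rw [if_neg he] at h3
    exact Or.inl h3


private lemma cage_base_n0 {K : Type*} [Field K] [Infinite K] {e : ℕ}
    (p0 : Fin 1 → K)
    (hlin : ∀ v : Fin 1 → K, ∃ c : K, v = c • p0)
    {P : MvPolynomial (Fin 1) K} (hP : P.IsHomogeneous e) (hvan : eval p0 P = 0) : P = 0 := by
  apply hP.eq_zero_of_forall_eval_eq_zero
  intro v
  obtain ⟨c, rfl⟩ := hlin v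
  rw [cage_eval_smul_homog hP, hvan, mul_zero]

private lemma cage_aux {K : Type*} [Field K] [Infinite K] :
    ∀ (N n e : ℕ), n + e ≤ N →
    ∀ (L : Fin n → Fin (e + 1) → MvPolynomial (Fin (n + 1)) K),
      (∀ j i, (L j i).IsHomogeneous 1) →
    ∀ (p : (Fin n → Fin (e + 1)) → Fin (n + 1) → K),
      (∀ I, p I ≠ 0) →
      (∀ (I : Fin n → Fin (e + 1)) (v : Fin (n + 1) → K),
        (∀ j, eval v (L j (I j)) = 0) ↔ ∃ c : K, v = c • p I) →
      (∀ (j : Fin n) (i : Fin (e + 1)) (I : Fin n → Fin (e + 1)),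
        i ≠ I j → eval (p I) (L j i) ≠ 0) →
    ∀ P : MvPolynomial (Fin (n + 1)) K, P.IsHomogeneous e →
      (∀ I, (∑ j, (I j : ℕ)) ≤ e → eval (p I) P = 0) → P = 0 := by
  intro N
  induction N with
  | zero =>
      intro n e hN
      have hn0 : n = 0 := by omega
      subst hn0
      intro L hL p hp0 hline hne P hP hvan
      exact cage_base_n0 (p Fin.elim0) (fun v => (hline Fin.elim0 v).mp (fun j => j.elim0))
        hP (hvan Fin.elim0 (by simp))
  | succ N ih =>
      intro n e hN
      rcases n with _ | m
      · -- base case : zero colors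
        intro L hL p hp0 hline hne P hP hvan
        exact cage_base_n0 (p Fin.elim0) (fun v => (hline Fin.elim0 v).mp (fun j => j.elim0))
          hP (hvan Fin.elim0 (by simp))
      rcases e with _ | e'
      · -- base case : degree zero
        intro L hL p hp0 hline hne P hP hvan
        have hPC : homogeneousComponent 0 P = P := by
          rw [homogeneousComponent_of_mem ((mem_homogeneousSubmodule _ _).mpr hP), if_pos rfl]
        have hP0 : P = C (coeff 0 P) := by
          conv_lhs => rw [← hPC, homogeneousComponent_zero]
        have hv := hvan (fun _ => (0 : Fin 1)) (by simp)
        rw [hP0, eval_C] at hv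
        rw [hP0, hv, map_zero]
      -- main case
      intro L hL p hp0 hline hne P hP hvan
      set L₀ : MvPolynomial (Fin (m + 2)) K := L 0 0 with hL₀def
      have hL₀ne : L₀ ≠ 0 := by
        intro h0
        have hI : (0 : Fin (e' + 2)) ≠ (fun j => if j = 0 then 1 else 0) (0 : Fin (m + 1)) := by
          simp
        have := hne 0 0 (fun j => if j = 0 then 1 else 0) hI
        rw [← hL₀def, h0, map_zero] at this
        exact this rfl
      set cc : Fin (m + 2) → K := fun k => coeff (Finsupp.single k 1) L₀ with hccdef
      have hexp : L₀ = ∑ k, C (cc k) * X k := cage_homog_one_expand (hL 0 0)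
      have hex : ∃ k₀, cc k₀ ≠ 0 := by
        by_contra hall
        push_neg at hall
        apply hL₀ne
        rw [hexp]
        exact Finset.sum_eq_zero fun k _ => by rw [hall k, map_zero, zero_mul]
      obtain ⟨k₀, hc⟩ := hex
      set c : K := cc k₀ with hcdef
      set ψ : Fin (m + 2) → MvPolynomial (Fin (m + 1)) K :=
        Fin.insertNth k₀ (C (-c⁻¹) * ∑ k', C (cc (k₀.succAbove k')) * X k') X with hψdef
      set φ : (Fin (m + 1) → K) → Fin (m + 2) → K :=
        fun w => Fin.insertNth k₀ (-c⁻¹ * ∑ k', cc (k₀.succAbove k') * w k') w with hφdef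
      have hφsA : ∀ (w : Fin (m + 1) → K) (j : Fin (m + 1)), φ w (k₀.succAbove j) = w j := by
        intro w j
        rw [hφdef]
        exact Fin.insertNth_apply_succAbove k₀ _ _ _
      have hφk₀ : ∀ w : Fin (m + 1) → K,
          φ w k₀ = -c⁻¹ * ∑ k', cc (k₀.succAbove k') * w k' := by
        intro w
        rw [hφdef]
        exact Fin.insertNth_apply_same k₀ _ _
      have hψhom : ∀ k, (ψ k).IsHomogeneous 1 := by
        intro k
        refine Fin.succAboveCases k₀ ?_ ?_ k
        · rw [hψdef, Fin.insertNth_apply_same]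
          have : (∑ k' : Fin (m + 1), C (cc (k₀.succAbove k')) * X k' :
              MvPolynomial (Fin (m + 1)) K).IsHomogeneous 1 :=
            IsHomogeneous.sum _ _ _ fun k' _ => isHomogeneous_C_mul_X _ _
          exact this.C_mul _
        · intro j
          rw [hψdef, Fin.insertNth_apply_succAbove]
          exact isHomogeneous_X _ _
      have hφeval : ∀ (w : Fin (m + 1) → K) (P' : MvPolynomial (Fin (m + 2)) K),
          eval w (aeval ψ P') = eval (φ w) P' := by
        intro w P'
        rw [cage_eval_aeval]
        have hfun : (fun k => eval w (ψ k)) = φ w := by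
          funext k
          refine Fin.succAboveCases k₀ ?_ ?_ k
          · rw [hψdef, Fin.insertNth_apply_same, hφk₀]
            simp [eval_C, eval_X]
          · intro j
            rw [hψdef, Fin.insertNth_apply_succAbove, hφsA, eval_X]
        rw [hfun]
      have hevalL₀ : ∀ v : Fin (m + 2) → K,
          eval v L₀ = cc k₀ * v k₀ + ∑ k', cc (k₀.succAbove k') * v (k₀.succAbove k') := by
        intro v
        rw [hexp, map_sum]
        simp only [map_mul, eval_C, eval_X]
        rw [Fin.sum_univ_succAbove (fun k => cc k * v k) k₀]
      have hevalφL₀ : ∀ w : Fin (m + 1) → K, eval (φ w) L₀ = 0 := by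
        intro w
        rw [hevalL₀, hφk₀]
        have : ∑ k', cc (k₀.succAbove k') * φ w (k₀.succAbove k')
            = ∑ k', cc (k₀.succAbove k') * w k' :=
          Finset.sum_congr rfl fun k' _ => by rw [hφsA]
        rw [this, ← hcdef]
        field_simp
        ring
      have hsection : ∀ v : Fin (m + 2) → K, eval v L₀ = 0 →
          φ (fun j => v (k₀.succAbove j)) = v := by
        intro v hv
        funext k
        refine Fin.succAboveCases k₀ ?_ (fun j => hφsA _ j) k
        rw [hφk₀]
        rw [hevalL₀] at hv
        have hT : ∑ k', cc (k₀.succAbove k') * v (k₀.succAbove k') = -(c * v k₀) := by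
          rw [← hcdef] at hv
          linear_combination hv
        rw [hT]
        field_simp
      have hφsmul : ∀ (a : K) (w : Fin (m + 1) → K), φ (a • w) = a • φ w := by
        intro a w
        funext k
        refine Fin.succAboveCases k₀ ?_ ?_ k
        · rw [Pi.smul_apply, hφk₀, hφk₀, Finset.mul_sum, smul_eq_mul, Finset.mul_sum]
          rw [Finset.mul_sum]
          refine Finset.sum_congr rfl fun k' _ => ?_
          rw [Pi.smul_apply, smul_eq_mul]
          ring
        · intro j
          rw [Pi.smul_apply, hφsA, hφsA, Pi.smul_apply]
      have hφ0 : φ 0 = 0 := by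
        have h := hφsmul 0 0
        rwa [zero_smul, zero_smul] at h
      -- the restricted cage
      set L' : Fin m → Fin (e' + 2) → MvPolynomial (Fin (m + 1)) K :=
        fun j i => aeval ψ (L j.succ i) with hL'def
      set p' : (Fin m → Fin (e' + 2)) → Fin (m + 1) → K :=
        fun I k => p (Fin.cons 0 I) (k₀.succAbove k) with hp'def
      have hpH : ∀ I' : Fin m → Fin (e' + 2), eval (p (Fin.cons 0 I')) L₀ = 0 := by
        intro I'
        have h1 := (hline (Fin.cons 0 I') (p (Fin.cons 0 I'))).mpr ⟨1, (one_smul _ _).symm⟩ 0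
        rwa [Fin.cons_zero] at h1
      have hφp' : ∀ I', φ (p' I') = p (Fin.cons 0 I') := fun I' => hsection _ (hpH I')
      have hPrest : aeval ψ P = 0 := by
        refine ih m (e' + 1) (by omega) L'
          (fun j i => by simpa [hL'def] using (hL j.succ i).aeval ψ hψhom) p' ?_ ?_ ?_ (aeval ψ P)
          (by simpa using hP.aeval ψ hψhom) ?_
        · intro I' h0
          apply hp0 (Fin.cons 0 I')
          rw [← hφp' I', h0, hφ0]
        · intro I' w
          constructor
          · intro hall
            have hLall : ∀ jj : Fin (m + 1),
                eval (φ w) (L jj ((Fin.cons 0 I' : Fin (m + 1) → Fin (e' + 2)) jj)) = 0 := by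
              intro jj
              refine Fin.cases ?_ ?_ jj
              · rw [Fin.cons_zero]
                exact hevalφL₀ w
              · intro j
                rw [Fin.cons_succ]
                have h1 := hall j
                simp only [hL'def] at h1
                rwa [hφeval] at h1
            obtain ⟨c', hc'⟩ := (hline _ (φ w)).mp hLall
            refine ⟨c', ?_⟩
            have hw : w = fun j => φ w (k₀.succAbove j) := by
              funext j; rw [hφsA]
            rw [hw, hc', ← hφp' I']
            funext j
            rw [Pi.smul_apply, Pi.smul_apply, hφsA]
          · rintro ⟨c', rfl⟩ j
            simp only [hL'def]
            rw [hφeval, hφsmul, hφp']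
            have h2 := (hline (Fin.cons 0 I') (c' • p (Fin.cons 0 I'))).mpr ⟨c', rfl⟩ j.succ
            rwa [Fin.cons_succ] at h2
        · intro j i I' hij
          simp only [hL'def]
          rw [hφeval, hφp']
          have hij' : i ≠ (Fin.cons 0 I' : Fin (m + 1) → Fin (e' + 2)) j.succ := by
            rwa [Fin.cons_succ]
          exact hne j.succ i (Fin.cons 0 I') hij'
        · intro I' hsum
          rw [hφeval, hφp']
          apply hvan (Fin.cons 0 I')
          have : ∑ jj, (((Fin.cons 0 I' : Fin (m + 1) → Fin (e' + 2))) jj : ℕ) = ∑ j, (I' j : ℕ) := by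
            rw [Fin.sum_univ_succ]
            simp
          omega
      have hvanH : ∀ v : Fin (m + 2) → K, eval v L₀ = 0 → eval v P = 0 := by
        intro v hv
        rw [← hsection v hv, ← hφeval, hPrest, map_zero]
      obtain ⟨Q, hQ⟩ := cage_hyperplane_dvd (hL 0 0) hL₀ne P hvanH
      rcases cage_homog_factor hP (hL 0 0) hQ with h0 | ⟨Qc, hQc, hPQc⟩
      · exact h0
      -- division step
      set E : Fin (m + 1) → Fin (e' + 1) → Fin (e' + 2) :=
        fun j => if j = 0 then Fin.succ else Fin.castSucc with hEdef
      have hE0 : ∀ i, E 0 i = i.succ := fun i => by simp [hEdef]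
      have hEsucc : ∀ (j : Fin m) (i), E j.succ i = i.castSucc := fun j i => by
        simp [hEdef, Fin.succ_ne_zero]
      have hEinj : ∀ j : Fin (m + 1), Function.Injective (E j) := by
        intro j
        refine Fin.cases ?_ ?_ j
        · have hfe : E 0 = Fin.succ := funext hE0
          rw [hfe]; exact Fin.succ_injective _
        · intro j'
          have hfe : E j'.succ = Fin.castSucc := funext (hEsucc j')
          rw [hfe]; exact Fin.castSucc_injective _
      have hQc0 : Qc = 0 := by
        refine ih (m + 1) e' (by omega) (fun j i => L j (E j i)) (fun j i => hL j (E j i))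
          (fun I => p (fun j => E j (I j))) (fun I => hp0 _) ?_ ?_ Qc hQc ?_
        · intro I v
          exact hline (fun j => E j (I j)) v
        · intro j i I hij
          exact hne j (E j i) (fun j' => E j' (I j')) (fun hEq => hij (hEinj j hEq))
        · intro I hsum
          have h1 : eval (p fun j => E j (I j)) P = 0 := by
            apply hvan
            have hs : ∑ j, ((E j (I j)) : ℕ) = (∑ j, (I j : ℕ)) + 1 := by
              rw [Fin.sum_univ_succ, Fin.sum_univ_succ (fun j => ((I j : ℕ)))]
              rw [hE0]
              have : ∀ j : Fin m, ((E j.succ (I j.succ)) : ℕ) = (I j.succ : ℕ) := by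
                intro j; rw [hEsucc, Fin.coe_castSucc]
              rw [Finset.sum_congr rfl fun j _ => this j]
              rw [Fin.val_succ]
              ring
            omega
          have h2 : eval (p fun j => E j (I j)) L₀ ≠ 0 := by
            apply hne 0 0
            rw [hE0]
            exact (Fin.succ_ne_zero _).symm
          rw [hPQc, map_mul] at h1
          rcases mul_eq_zero.mp h1 with h | h
          · exact absurd h h2
          · exact h
      rw [hPQc, hQc0, mul_zero]




/-- A homogeneous polynomial of degree `e < d` vanishing on a simplicial set of
nodes of a `d^{n}`-cage is zero; consequently any nonzero homogeneous polynomial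
of degree at most `d` vanishing on a supra-simplicial set has degree exactly `d`. -/
theorem low_degree_vanish_on_simplicial_implies_zero
    {K : Type*} [Field K] [Infinite K] (n d : ℕ) (hn : 1 ≤ n) (hd : 1 ≤ d)
    (L : Fin n → Fin d → MvPolynomial (Fin (n + 1)) K)
    (hL : ∀ j i, (L j i).IsHomogeneous 1)
    (p : (Fin n → Fin d) → Fin (n + 1) → K)
    (hp0 : ∀ I, p I ≠ 0)
    (hind : ∀ I : Fin n → Fin d, LinearIndependent K fun j => L j (I j))
    (hline : ∀ (I : Fin n → Fin d) (v : Fin (n + 1) → K),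
      (∀ j, MvPolynomial.eval v (L j (I j)) = 0) ↔ ∃ c : K, v = c • p I)
    (hne : ∀ (j : Fin n) (i : Fin d) (I : Fin n → Fin d),
      i ≠ I j → MvPolynomial.eval (p I) (L j i) ≠ 0) :
    (∀ (P : MvPolynomial (Fin (n + 1)) K) (e : ℕ), e < d → P.IsHomogeneous e →
        (∀ I : Fin n → Fin d, (∑ j, (I j : ℕ)) ≤ d - 1 →
          MvPolynomial.eval (p I) P = 0) →
        P = 0) ∧
    (∀ (P : MvPolynomial (Fin (n + 1)) K) (e : ℕ), e ≤ d → P.IsHomogeneous e →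
        P ≠ 0 →
        (∀ I : Fin n → Fin d, (∑ j, (I j : ℕ)) ≤ d →
          MvPolynomial.eval (p I) P = 0) →
        e = d) := by
  have part1 : ∀ (P : MvPolynomial (Fin (n + 1)) K) (e : ℕ), e < d → P.IsHomogeneous e →
      (∀ I : Fin n → Fin d, (∑ j, (I j : ℕ)) ≤ d - 1 →
        MvPolynomial.eval (p I) P = 0) →
      P = 0 := by
    intro P e hed hP hvan
    have hde : e + 1 ≤ d := hed
    refine cage_aux (n + e) n e le_rfl (fun j i => L j (Fin.castLE hde i))
      (fun j i => hL j _) (fun I => p (fun j => Fin.castLE hde (I j))) (fun I => hp0 _)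
      ?_ ?_ P hP ?_
    · intro I v
      exact hline _ v
    · intro j i I hij
      exact hne j (Fin.castLE hde i) _ (fun h => hij (Fin.castLE_injective hde h))
    · intro I hsum
      apply hvan
      have hsum2 : ∑ j, ((Fin.castLE hde (I j) : Fin d) : ℕ) = ∑ j, (I j : ℕ) :=
        Finset.sum_congr rfl fun j _ => Fin.coe_castLE hde (I j)
      omega
  refine ⟨part1, ?_⟩
  intro P e hed hP hPne hvan
  by_contra hne'
  exact hPne (part1 P e (lt_of_le_of_ne hed hne') hP
    (fun I hI => hvan I (le_trans hI (by omega))))
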